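/- Let F ⊆ 2^[n] be a family such that |A △ B| ∈ {2, 4, ..., 2k} for all distinct A, B ∈ F (all symmetric differences are even and at most 2k). Then |F| ≤ ∑_{i=0}^{k} C(n, i) − |S|, where S is the set of k-element subsets of [n] not contained in any member of F. -/

import Mathlib

open Finset

noncomputable section StmtAux

private def chiF (n : ℕ) (T : Finset (Fin n)) : Finset (Fin n) → ℝ :=
  fun X => if T ⊆ X then 1 else 0

private def Wspan (n d : ℕ) : Submodule ℝ (Finset (Fin n) → ℝ) :=
  Submodule.span ℝ (chiF n '' {T | T.card ≤ d})

private lemma chiF_mem {n d : ℕ} {T : Finset (Fin n)} (h : T.card ≤ d) :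
    chiF n T ∈ Wspan n d :=
  Submodule.subset_span ⟨T, h, rfl⟩

private lemma Wspan_mono {n d d' : ℕ} (h : d ≤ d') : Wspan n d ≤ Wspan n d' :=
  Submodule.span_mono (Set.image_mono fun T hT => le_trans hT h)

private lemma mul_affine_mem {n d : ℕ} (c : ℝ) (e : Fin n → ℝ)
    (h : Finset (Fin n) → ℝ) (hh : h ∈ Wspan n d) :
    (fun X => h X * (c + ∑ i, e i * (if i ∈ X then (1:ℝ) else 0))) ∈ Wspan n (d + 1) := by
  induction hh using Submodule.span_induction with
  | mem x hx =>
    obtain ⟨T, hT, rfl⟩ := hx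
    have key : (fun X => chiF n T X * (c + ∑ i, e i * (if i ∈ X then (1:ℝ) else 0)))
        = c • chiF n T + ∑ i, e i • chiF n (insert i T) := by
      funext X
      by_cases hTX : T ⊆ X
      · have : ∀ i : Fin n, (insert i T ⊆ X) ↔ i ∈ X := by
          intro i; rw [Finset.insert_subset_iff]; simp [hTX]
        simp only [chiF, hTX, if_pos, Pi.add_apply, Pi.smul_apply, Finset.sum_apply,
          smul_eq_mul, this]
        ring_nf
      · have : ∀ i : Fin n, ¬ insert i T ⊆ X := fun i hi =>
          hTX (Finset.Subset.trans (Finset.subset_insert i T) hi)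
        simp [chiF, hTX, this]
    rw [key]
    exact add_mem (Submodule.smul_mem _ _ (chiF_mem (le_trans hT (Nat.le_succ d))))
      (Submodule.sum_mem _ fun i _ => Submodule.smul_mem _ _
        (chiF_mem (le_trans (Finset.card_insert_le i T) (Nat.succ_le_succ hT))))
  | zero =>
    simp only [Pi.zero_apply, zero_mul]
    exact Submodule.zero_mem _
  | add x y hx hy ihx ihy =>
    have : (fun X => (x + y) X * (c + ∑ i, e i * (if i ∈ X then (1:ℝ) else 0)))
        = (fun X => x X * (c + ∑ i, e i * (if i ∈ X then (1:ℝ) else 0)))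
          + (fun X => y X * (c + ∑ i, e i * (if i ∈ X then (1:ℝ) else 0))) := by
      funext X; simp [add_mul]
    rw [this]; exact add_mem ihx ihy
  | smul a x hx ih =>
    have : (fun X => (a • x) X * (c + ∑ i, e i * (if i ∈ X then (1:ℝ) else 0)))
        = a • (fun X => x X * (c + ∑ i, e i * (if i ∈ X then (1:ℝ) else 0))) := by
      funext X; simp [mul_assoc]
    rw [this]; exact Submodule.smul_mem _ _ ih

private lemma prod_affine_mem {n : ℕ} (m : ℕ) (c : ℕ → ℝ) (e : ℕ → Fin n → ℝ) :
    (fun X => ∏ j ∈ Finset.range m,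
        (c j + ∑ i, e j i * (if i ∈ X then (1:ℝ) else 0))) ∈ Wspan n m := by
  induction m with
  | zero =>
    have : (fun _ : Finset (Fin n) => (1:ℝ)) = chiF n ∅ := by
      funext X; simp [chiF]
    simpa [this] using chiF_mem (n := n) (d := 0) (T := ∅) (by simp)
  | succ m ih =>
    have heq : (fun X : Finset (Fin n) => ∏ j ∈ Finset.range (m+1),
          (c j + ∑ i, e j i * (if i ∈ X then (1:ℝ) else 0)))
        = (fun X : Finset (Fin n) => (∏ j ∈ Finset.range m,
            (c j + ∑ i, e j i * (if i ∈ X then (1:ℝ) else 0)))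
            * (c m + ∑ i, e m i * (if i ∈ X then (1:ℝ) else 0))) := by
      funext X; rw [Finset.prod_range_succ]
    rw [heq]; exact mul_affine_mem (c m) (e m) _ ih

private lemma card_symmDiff_affine {n : ℕ} (A X : Finset (Fin n)) :
    ((symmDiff A X).card : ℝ)
      = (A.card : ℝ) + ∑ i, (if i ∈ A then (-1:ℝ) else 1) * (if i ∈ X then 1 else 0) := by
  have h1 : ∀ B : Finset (Fin n), (B.card : ℝ) = ∑ i : Fin n, (if i ∈ B then (1:ℝ) else 0) := by
    intro B
    rw [Finset.sum_boole]
    congr 1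
    rw [Finset.filter_mem_eq_inter, Finset.univ_inter]
  rw [h1, h1 A, ← Finset.sum_add_distrib]
  refine Finset.sum_congr rfl fun i _ => ?_
  by_cases hA : i ∈ A <;> by_cases hX : i ∈ X <;>
    simp [Finset.mem_symmDiff, hA, hX]

private def fA (n k : ℕ) (A : Finset (Fin n)) : Finset (Fin n) → ℝ :=
  fun X => ∏ j ∈ Finset.range k, ((2 * (j + 1) : ℝ) - ((symmDiff A X).card : ℝ))

private lemma fA_mem {n k : ℕ} (A : Finset (Fin n)) : fA n k A ∈ Wspan n k := by
  have heq : fA n k A = fun X => ∏ j ∈ Finset.range k,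
      (((2 * (j + 1) : ℝ) - A.card) + ∑ i, (if i ∈ A then (1:ℝ) else -1)
        * (if i ∈ X then (1:ℝ) else 0)) := by
    funext X
    refine Finset.prod_congr rfl fun j _ => ?_
    rw [card_symmDiff_affine]
    have : ∑ i, (if i ∈ A then (1:ℝ) else -1) * (if i ∈ X then (1:ℝ) else 0)
        = - ∑ i, (if i ∈ A then (-1:ℝ) else 1) * (if i ∈ X then (1:ℝ) else 0) := by
      rw [← Finset.sum_neg_distrib]
      refine Finset.sum_congr rfl fun i _ => ?_
      by_cases hA : i ∈ A <;> by_cases hX : i ∈ X <;> simp [hA, hX]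
    rw [this]; ring
  rw [heq]
  exact prod_affine_mem k _ _

private lemma fA_self_ne_zero {n k : ℕ} (A : Finset (Fin n)) : fA n k A A ≠ 0 := by
  unfold fA
  rw [symmDiff_self]
  refine ne_of_gt (Finset.prod_pos fun j _ => ?_)
  simp only [Finset.bot_eq_empty, Finset.card_empty, Nat.cast_zero, sub_zero]
  positivity

private lemma fA_eq_zero {n k : ℕ} {A B : Finset (Fin n)} {m : ℕ}
    (h1 : 1 ≤ m) (h2 : m ≤ k) (h3 : (symmDiff A B).card = 2 * m) :
    fA n k A B = 0 := by
  unfold fA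
  refine Finset.prod_eq_zero (i := m - 1) (Finset.mem_range.mpr ?_) ?_
  · omega
  · rw [h3]
    push_cast [Nat.cast_sub h1]
    ring

end StmtAux

theorem stmt_13 (n k : ℕ) (F : Finset (Finset (Fin n)))
    (hdiff : ∀ A ∈ F, ∀ B ∈ F, A ≠ B →
      ∃ j, 1 ≤ j ∧ j ≤ k ∧ (symmDiff A B).card = 2 * j) :
    F.card ≤ ∑ i ∈ Finset.range (k + 1), n.choose i -
      ((Finset.powersetCard k (Finset.univ : Finset (Fin n))).filter
        (fun T => ∀ A ∈ F, ¬ T ⊆ A)).card := by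
  classical
  set S := (Finset.powersetCard k (Finset.univ : Finset (Fin n))).filter
      (fun T => ∀ A ∈ F, ¬ T ⊆ A) with hS
  -- members of S have card k and are not contained in any member of F
  have hScard : ∀ T ∈ S, T.card = k := by
    intro T hT
    have := (Finset.mem_filter.mp hT).1
    exact (Finset.mem_powersetCard.mp this).2
  have hSnot : ∀ T ∈ S, ∀ A ∈ F, ¬ T ⊆ A := fun T hT => (Finset.mem_filter.mp hT).2
  have hdisj : Disjoint F S := by
    rw [Finset.disjoint_left]
    intro X hXF hXS
    exact hSnot X hXS X hXF (Finset.Subset.refl X)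
  -- the family of functions
  set v : Finset (Fin n) → (Finset (Fin n) → ℝ) :=
    fun X => if X ∈ F then fA n k X else chiF n X with hv
  have hvmem : ∀ X ∈ F ∪ S, v X ∈ Wspan n k := by
    intro X hX
    by_cases hXF : X ∈ F
    · simpa [hv, hXF] using fA_mem (k := k) X
    · have hXS : X ∈ S := (Finset.mem_union.mp hX).resolve_left hXF
      simpa [hv, hXF] using chiF_mem (le_of_eq (hScard X hXS))
  -- linear independence
  have hLI : LinearIndependent ℝ (fun i : ↥(F ∪ S) => v ↑i) := by
    rw [Fintype.linearIndependent_iff]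
    intro g hg
    have heval : ∀ Y : Finset (Fin n), ∑ i : ↥(F ∪ S), g i * v ↑i Y = 0 := by
      intro Y
      have := congrFun hg Y
      simpa [Finset.sum_apply] using this
    -- step 1: coefficients for members of F vanish
    have step1 : ∀ i : ↥(F ∪ S), ↑i ∈ F → g i = 0 := by
      intro i hiF
      have h0 := heval ↑i
      rw [Finset.sum_eq_single i] at h0
      · have : v ↑i (↑i) ≠ 0 := by
          simp only [hv, if_pos hiF]
          exact fA_self_ne_zero _
        exact (mul_eq_zero.mp h0).resolve_right this
      · intro j _ hji
        have hji' : (↑j : Finset (Fin n)) ≠ ↑i := fun h => hji (Subtype.ext h)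
        by_cases hjF : (↑j : Finset (Fin n)) ∈ F
        · obtain ⟨m, hm1, hm2, hm3⟩ := hdiff ↑j hjF ↑i hiF hji'
          have : v ↑j (↑i) = 0 := by
            simp only [hv, if_pos hjF]
            exact fA_eq_zero hm1 hm2 hm3
          rw [this, mul_zero]
        · have hjS : (↑j : Finset (Fin n)) ∈ S := (Finset.mem_union.mp j.2).resolve_left hjF
          have : v ↑j (↑i) = 0 := by
            simp only [hv, if_neg hjF, chiF]
            rw [if_neg (hSnot _ hjS _ hiF)]
          rw [this, mul_zero]
      · intro h; exact absurd (Finset.mem_univ i) h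
    -- step 2: all coefficients vanish
    intro i
    by_cases hiF : (↑i : Finset (Fin n)) ∈ F
    · exact step1 i hiF
    · have hiS : (↑i : Finset (Fin n)) ∈ S := (Finset.mem_union.mp i.2).resolve_left hiF
      have h0 := heval ↑i
      rw [Finset.sum_eq_single i] at h0
      · have : v ↑i (↑i) = 1 := by
          simp [hv, if_neg hiF, chiF]
        rw [this, mul_one] at h0
        exact h0
      · intro j _ hji
        have hji' : (↑j : Finset (Fin n)) ≠ ↑i := fun h => hji (Subtype.ext h)
        by_cases hjF : (↑j : Finset (Fin n)) ∈ F
        · rw [step1 j hjF, zero_mul]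
        · have hjS : (↑j : Finset (Fin n)) ∈ S := (Finset.mem_union.mp j.2).resolve_left hjF
          have : v ↑j (↑i) = 0 := by
            simp only [hv, if_neg hjF, chiF]
            rw [if_neg]
            intro hsub
            exact hji' (Finset.eq_of_subset_of_card_le hsub
              (le_of_eq ((hScard _ hiS).trans (hScard _ hjS).symm)))
          rw [this, mul_zero]
      · intro h; exact absurd (Finset.mem_univ i) h
  -- spanning finset
  set w : Finset (Finset (Fin n) → ℝ) :=
    ((Finset.range (k+1)).biUnion
      (fun i => Finset.powersetCard i (Finset.univ : Finset (Fin n)))).image (chiF n) with hw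
  have hWle : Wspan n k ≤ Submodule.span ℝ (w : Set (Finset (Fin n) → ℝ)) := by
    apply Submodule.span_le.mpr
    rintro x ⟨T, hT, rfl⟩
    apply Submodule.subset_span
    simp only [hw, Finset.coe_image, Set.mem_image, Finset.mem_coe, Finset.mem_biUnion]
    exact ⟨T, ⟨T.card, Finset.mem_range.mpr (Nat.lt_succ_of_le hT),
      Finset.mem_powersetCard.mpr ⟨Finset.subset_univ T, rfl⟩⟩, rfl⟩
  -- dimension bound
  have hcard : (F ∪ S).card ≤ ∑ i ∈ Finset.range (k + 1), n.choose i := by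
    have hLI' : LinearIndependent ℝ
        (fun i : ↥(F ∪ S) => (⟨v ↑i, hWle (hvmem ↑i i.2)⟩ :
          ↥(Submodule.span ℝ (w : Set (Finset (Fin n) → ℝ))))) := by
      apply ((Submodule.span ℝ (w : Set (Finset (Fin n) → ℝ))).subtype.linearIndependent_iff
        (Submodule.ker_subtype _)).mp
      exact hLI
    have h1 : Fintype.card ↥(F ∪ S)
        ≤ Module.finrank ℝ ↥(Submodule.span ℝ (w : Set (Finset (Fin n) → ℝ))) :=
      hLI'.fintype_card_le_finrank
    have h2 : Module.finrank ℝ ↥(Submodule.span ℝ (w : Set (Finset (Fin n) → ℝ))) ≤ w.card :=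
      finrank_span_finset_le_card w
    have h3 : w.card ≤ ∑ i ∈ Finset.range (k + 1), n.choose i := by
      refine le_trans (Finset.card_image_le) (le_trans (Finset.card_biUnion_le) ?_)
      refine Finset.sum_le_sum fun i _ => ?_
      rw [Finset.card_powersetCard, Finset.card_univ, Fintype.card_fin]
    calc (F ∪ S).card = Fintype.card ↥(F ∪ S) := (Fintype.card_coe _).symm
      _ ≤ _ := h1
      _ ≤ w.card := h2
      _ ≤ _ := h3
  rw [Finset.card_union_of_disjoint hdisj] at hcard
  omega
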